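/- Let D be a finite directed graph in which every vertex has out-degree at most 1 and whose underlying undirected graph is a forest. Then there exists a subset E* of the edges of D with |E*| ≥ |E(D)|/2 such that for every vertex v of D, E* does not simultaneously contain an edge leaving v and an edge entering v. -/

import Mathlib

open SimpleGraph in
private lemma isAcyclic_anti {V : Type*} {G G' : SimpleGraph V} (hle : G ≤ G')
    (h : G'.IsAcyclic) : G.IsAcyclic := fun _ p hp => h (p.mapLe hle) (hp.mapLe hle)

open SimpleGraph Classical in
/-- A forest (given as a relation) is properly 2-colorable. -/
private lemma exists_two_coloring {V : Type*} [DecidableEq V] (E : Finset (V × V))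
    (h_loop : ∀ e ∈ E, e.1 ≠ e.2)
    (h_forest : (SimpleGraph.fromRel (fun a b => (a, b) ∈ E)).IsAcyclic) :
    ∃ c : V → Bool, ∀ e ∈ E, c e.1 ≠ c e.2 := by
  classical
  induction E using Finset.strongInduction with
  | _ E ih =>
    rcases eq_or_ne E ∅ with rfl | hne
    · exact ⟨fun _ => true, by simp⟩
    obtain ⟨⟨u, v⟩, he⟩ := Finset.nonempty_iff_ne_empty.mpr hne
    have huv : u ≠ v := h_loop _ he
    set E₀ : Finset (V × V) := E.erase (u, v) with hE₀
    have hsub : E₀ ⊂ E := Finset.erase_ssubset he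
    set G : SimpleGraph V := SimpleGraph.fromRel (fun a b => (a, b) ∈ E) with hG
    set G₀ : SimpleGraph V := SimpleGraph.fromRel (fun a b => (a, b) ∈ E₀) with hG₀
    have hle : G₀ ≤ G := by
      intro a b hab
      rw [hG₀, fromRel_adj] at hab
      rw [hG, fromRel_adj]
      exact ⟨hab.1, hab.2.imp (fun h => Finset.mem_of_mem_erase h)
        (fun h => Finset.mem_of_mem_erase h)⟩
    obtain ⟨c, hc⟩ := ih E₀ hsub (fun e heE₀ => h_loop e (Finset.mem_of_mem_erase heE₀))
      (isAcyclic_anti hle h_forest)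
    by_cases hcuv : c u ≠ c v
    · refine ⟨c, fun e heE => ?_⟩
      rcases eq_or_ne e (u, v) with h' | h'
      · rw [h']; exact hcuv
      · exact hc e (Finset.mem_erase.mpr ⟨h', heE⟩)
    push_neg at hcuv
    -- then (v, u) ∉ E, otherwise c v ≠ c u already
    have hvu : (v, u) ∉ E₀ := fun h => (hc (v, u) h) (by simpa using hcuv.symm)
    -- u is not reachable from v in G₀, else the edge u-v would not be a bridge in G
    have hnr : ¬ G₀.Reachable v u := by
      intro hr
      have hadj : G.Adj u v := by
        rw [hG, fromRel_adj]; exact ⟨huv, Or.inl he⟩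
      have hbridge := (isAcyclic_iff_forall_adj_isBridge.mp h_forest) hadj
      rw [isBridge_iff] at hbridge
      refine hbridge ?_
      refine Reachable.symm (Reachable.mono ?_ hr)
      intro a b hab
      rw [hG₀, fromRel_adj] at hab
      constructor
      · exact hle (by rw [hG₀, fromRel_adj]; exact hab)
      · rw [fromEdgeSet_adj]
        rintro ⟨hmem, -⟩
        simp only [Set.mem_singleton_iff, Sym2.eq, Sym2.rel_iff'] at hmem
        rcases hmem with h' | h'
        · obtain ⟨rfl, rfl⟩ := Prod.mk.injEq .. ▸ h'
          rcases hab.2 with h'' | h''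
          · exact (Finset.notMem_erase _ _) h''
          · exact hvu h''
        · obtain ⟨rfl, rfl⟩ := Prod.mk.injEq .. ▸ h'
          rcases hab.2 with h'' | h''
          · exact hvu h''
          · exact (Finset.notMem_erase _ _) h''
    -- flip the colors on the component of v in G₀
    refine ⟨fun x => if G₀.Reachable v x then !c x else c x, ?_⟩
    have hcomp : ∀ a b : V, G₀.Adj a b → (G₀.Reachable v a ↔ G₀.Reachable v b) :=
      fun a b hab => ⟨fun h => h.trans hab.reachable, fun h => h.trans hab.symm.reachable⟩
    intro e heE
    beta_reduce
    rcases ne_or_eq e (u, v) with h' | h'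
    · replace h' : e ∈ E₀ := Finset.mem_erase.mpr ⟨h', heE⟩
      have hadj : G₀.Adj e.1 e.2 := by
        rw [hG₀, fromRel_adj]
        exact ⟨h_loop e (Finset.mem_of_mem_erase h'), Or.inl (by simpa using h')⟩
      have := hc e h'
      by_cases hr : G₀.Reachable v e.1
      · rw [if_pos hr, if_pos ((hcomp _ _ hadj).mp hr)]
        simpa using this
      · rw [if_neg hr, if_neg (fun h => hr ((hcomp _ _ hadj).mpr h))]
        exact this
    · rw [h']
      simp only [if_pos (Reachable.refl v), if_neg hnr]
      rw [hcuv]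
      simp

/-- Let `D` be a finite directed graph (edge set `E`, no self-loops) in which every
vertex has out-degree at most `1` and whose underlying undirected graph is a
forest. Then there is a subset `E'` of the edges with `|E'| ≥ |E| / 2` such that
no vertex simultaneously has an edge of `E'` leaving it and an edge of `E'`
entering it. -/
theorem arborescence_parity_edge_selection {V : Type*} [Fintype V] [DecidableEq V]
    (E : Finset (V × V))
    (h_loop : ∀ e ∈ E, e.1 ≠ e.2)
    (h_out : ∀ u v w : V, (u, v) ∈ E → (u, w) ∈ E → v = w)
    (h_forest : (SimpleGraph.fromRel (fun a b => (a, b) ∈ E)).IsAcyclic) :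
    ∃ E' ⊆ E, E.card ≤ 2 * E'.card ∧
      ∀ v : V, ¬ ((∃ w, (v, w) ∈ E') ∧ (∃ u, (u, v) ∈ E')) := by
  classical
  obtain ⟨c, hc⟩ := exists_two_coloring E h_loop h_forest
  -- pick the majority color among edge tails
  have key : ∀ b : Bool, ∃ E' ⊆ E, (E.filter (fun e => c e.1 = b)).card ≤ E'.card ∧
      ∀ v : V, ¬ ((∃ w, (v, w) ∈ E') ∧ (∃ u, (u, v) ∈ E')) := by
    intro b
    refine ⟨E.filter (fun e => c e.1 = b), Finset.filter_subset _ _, le_refl _, ?_⟩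
    rintro v ⟨⟨w, hw⟩, ⟨u, hu⟩⟩
    simp only [Finset.mem_filter] at hw hu
    have h1 : c v = b := hw.2
    have h2 : c u = b := hu.2
    have h3 : c u ≠ c v := hc (u, v) hu.1
    exact h3 (h2.trans h1.symm)
  have hsplit : E.card = (E.filter (fun e => c e.1 = true)).card +
      (E.filter (fun e => c e.1 = false)).card := by
    rw [← Finset.card_filter_add_card_filter_not (p := fun e => c e.1 = true)]
    have : Finset.filter (fun a => ¬c a.1 = true) E = Finset.filter (fun e => c e.1 = false) E := by
      apply Finset.filter_congr; intro e _; simp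
    rw [this]
  rcases le_total (E.filter (fun e => c e.1 = true)).card
      (E.filter (fun e => c e.1 = false)).card with hle | hle
  · obtain ⟨E', hsub, hcard, hprop⟩ := key false
    exact ⟨E', hsub, by omega, hprop⟩
  · obtain ⟨E', hsub, hcard, hprop⟩ := key true
    exact ⟨E', hsub, by omega, hprop⟩
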